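/- If p = γ·log(l)/l with γ ≥ 1, and lc = (1+ε)·ra for fixed constants c, a, ε > 0, then (lp)^(a−1) · Σ_{i=0}^{r−1} (1−p)^(l − ia/c) = o(r) as l, r → ∞ subject to lc = (1+ε)ra; consequently the greedy algorithm saturates r − o(r) right vertices in expectation. -/

import Mathlib

open Finset Real Filter

/-- If p = γ log l / l with γ ≥ 1 and lc = (1+ε) r a, then
    (lp)^(a-1) Σ_{i=0}^{r-1} (1-p)^(l - ia/c) = o(r) as l, r → ∞ along the relation. -/
theorem greedy_error_sublinear (a c : ℕ) (ha : 1 ≤ a) (hc : 0 < c)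
    (γ ε : ℝ) (hγ : 1 ≤ γ) (hε : 0 < ε)
    (l : ℕ → ℝ) (r : ℕ → ℕ)
    (hl : Tendsto l atTop atTop)
    (hr : Tendsto (fun n => (r n : ℝ)) atTop atTop)
    (hrel : ∀ n, l n * (c : ℝ) = (1 + ε) * (r n : ℝ) * (a : ℝ)) :
    Tendsto (fun n =>
      ((l n * (γ * Real.log (l n) / l n)) ^ (a - 1) *
        ∑ i ∈ Finset.range (r n),
          (1 - γ * Real.log (l n) / l n) ^ (l n - (i : ℝ) * (a : ℝ) / (c : ℝ))) / (r n : ℝ))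
      atTop (nhds 0) := by
  have h1ε : (0:ℝ) < 1 + ε := by linarith
  set δ : ℝ := ε / (1 + ε) with hδdef
  have hδ : 0 < δ := div_pos hε h1ε
  set k : ℕ := a - 1 with hk
  -- the dominating function
  set g : ℕ → ℝ := fun n => γ ^ k * (Real.log (l n) ^ (k:ℝ) / (l n) ^ δ) with hg
  have hglim : Tendsto g atTop (nhds 0) := by
    have h0 : Tendsto (fun x : ℝ => Real.log x ^ (k:ℝ) / x ^ δ) atTop (nhds 0) :=
      (isLittleO_log_rpow_rpow_atTop (k:ℝ) hδ).tendsto_div_nhds_zero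
    have h := (h0.comp hl).const_mul (γ ^ k)
    rw [mul_zero] at h
    exact h
  -- eventual facts
  have hplim : Tendsto (fun n => γ * Real.log (l n) / l n) atTop (nhds 0) := by
    have h0 : Tendsto (fun x : ℝ => γ * Real.log x / x) atTop (nhds 0) := by
      have h1 : Tendsto (fun x : ℝ => Real.log x ^ ((1:ℕ):ℝ) / x ^ (1:ℝ)) atTop (nhds 0) :=
        (isLittleO_log_rpow_rpow_atTop ((1:ℕ):ℝ) one_pos).tendsto_div_nhds_zero
      have h2 : Tendsto (fun x : ℝ => Real.log x / x) atTop (nhds 0) := by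
        refine h1.congr fun x => ?_
        rw [Nat.cast_one, Real.rpow_one, Real.rpow_one]
      simpa [mul_div_assoc] using h2.const_mul γ
    exact h0.comp hl
  have hev1 : ∀ᶠ n in atTop, (1:ℝ) ≤ l n := hl.eventually (eventually_ge_atTop 1)
  have hev2 : ∀ᶠ n in atTop, γ * Real.log (l n) / l n ≤ 1/2 := by
    have := hplim.eventually (eventually_le_nhds (by norm_num : (0:ℝ) < 1/2))
    exact this
  have hev3 : ∀ᶠ n in atTop, (1:ℝ) ≤ (r n : ℝ) := hr.eventually (eventually_ge_atTop 1)
  -- squeeze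
  refine squeeze_zero' ?_ ?_ hglim
  · filter_upwards [hev1, hev2] with n hL hp2
    have hL0 : (0:ℝ) < l n := lt_of_lt_of_le one_pos hL
    have hp0 : 0 ≤ γ * Real.log (l n) / l n :=
      div_nonneg (mul_nonneg (by linarith) (Real.log_nonneg hL)) hL0.le
    have h1p : (0:ℝ) ≤ 1 - γ * Real.log (l n) / l n := by linarith
    refine div_nonneg (mul_nonneg (pow_nonneg ?_ _) ?_) (Nat.cast_nonneg _)
    · have : 0 ≤ Real.log (l n) := Real.log_nonneg hL
      positivity
    · exact Finset.sum_nonneg fun i _ => Real.rpow_nonneg h1p _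
  · filter_upwards [hev1, hev2, hev3] with n hL hp2 hR
    have hL0 : (0:ℝ) < l n := lt_of_lt_of_le one_pos hL
    have hR0 : (0:ℝ) < (r n : ℝ) := lt_of_lt_of_le one_pos hR
    set p : ℝ := γ * Real.log (l n) / l n with hpdef
    have hp0 : 0 ≤ p :=
      div_nonneg (mul_nonneg (by linarith) (Real.log_nonneg hL)) hL0.le
    have h1p : (0:ℝ) < 1 - p := by linarith
    have hlp : l n * p = γ * Real.log (l n) := by
      rw [hpdef]; field_simp
    have hpl : p * l n = γ * Real.log (l n) := by rw [mul_comm]; exact hlp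
    -- each summand bounded by (l n) ^ (-δ)
    have hterm : ∀ i ∈ Finset.range (r n),
        (1 - p) ^ (l n - (i:ℝ) * (a:ℝ) / (c:ℝ)) ≤ (l n) ^ (-δ) := by
      intro i hi
      have hi' : (i:ℝ) ≤ (r n : ℝ) := by
        exact_mod_cast (Finset.mem_range.mp hi).le
      have hrac : (r n : ℝ) * (a:ℝ) / (c:ℝ) = l n / (1 + ε) := by
        have h := hrel n
        have hc0 : (0:ℝ) < (c:ℝ) := by exact_mod_cast hc
        field_simp
        nlinarith [h]
      have hexp : δ * l n ≤ l n - (i:ℝ) * (a:ℝ) / (c:ℝ) := by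
        have hc0 : (0:ℝ) < (c:ℝ) := by exact_mod_cast hc
        have ha0 : (0:ℝ) ≤ (a:ℝ) := Nat.cast_nonneg _
        have h1 : (i:ℝ) * (a:ℝ) / (c:ℝ) ≤ (r n : ℝ) * (a:ℝ) / (c:ℝ) := by
          gcongr
        rw [hrac] at h1
        have : δ * l n = l n - l n / (1 + ε) := by
          rw [hδdef]; field_simp; ring
        linarith
      calc (1 - p) ^ (l n - (i:ℝ) * (a:ℝ) / (c:ℝ))
          ≤ (1 - p) ^ (δ * l n) :=
            Real.rpow_le_rpow_of_exponent_ge h1p (by linarith) hexp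
        _ ≤ (Real.exp (-p)) ^ (δ * l n) := by
            apply Real.rpow_le_rpow h1p.le _ (by positivity)
            have := Real.add_one_le_exp (-p)
            linarith
        _ = Real.exp (-(δ * (γ * Real.log (l n)))) := by
            rw [← Real.exp_mul]
            congr 1
            calc -p * (δ * l n) = -(δ * (p * l n)) := by ring
              _ = -(δ * (γ * Real.log (l n))) := by rw [hpl]
        _ = (l n) ^ (-(δ * γ)) := by
            rw [Real.rpow_def_of_pos hL0]
            congr 1
            ring
        _ ≤ (l n) ^ (-δ) := by
            apply Real.rpow_le_rpow_of_exponent_le hL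
            nlinarith
    have hsum : ∑ i ∈ Finset.range (r n),
        (1 - p) ^ (l n - (i:ℝ) * (a:ℝ) / (c:ℝ)) ≤ (r n : ℝ) * (l n) ^ (-δ) := by
      calc ∑ i ∈ Finset.range (r n), (1 - p) ^ (l n - (i:ℝ) * (a:ℝ) / (c:ℝ))
          ≤ ∑ _i ∈ Finset.range (r n), (l n) ^ (-δ) := Finset.sum_le_sum hterm
        _ = (r n : ℝ) * (l n) ^ (-δ) := by
            rw [Finset.sum_const, Finset.card_range, nsmul_eq_mul]
    have hA : (l n * p) ^ k = γ ^ k * Real.log (l n) ^ k := by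
      rw [hlp, mul_pow]
    have hA0 : 0 ≤ γ ^ k * Real.log (l n) ^ k := by
      have : 0 ≤ Real.log (l n) := Real.log_nonneg hL
      positivity
    calc ((l n * p) ^ k * ∑ i ∈ Finset.range (r n),
            (1 - p) ^ (l n - (i:ℝ) * (a:ℝ) / (c:ℝ))) / (r n : ℝ)
        ≤ ((l n * p) ^ k * ((r n : ℝ) * (l n) ^ (-δ))) / (r n : ℝ) := by
          have hnn : (0:ℝ) ≤ (l n * p) ^ k := hA ▸ hA0
          exact (div_le_div_iff_of_pos_right hR0).mpr (mul_le_mul_of_nonneg_left hsum hnn)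
      _ = (γ ^ k * Real.log (l n) ^ k) * (l n) ^ (-δ) := by
          rw [hA]; field_simp
      _ = g n := by
          rw [hg]
          simp only [Real.rpow_natCast, Real.rpow_neg hL0.le, div_eq_mul_inv]
          ring
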